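/- Let 0 < p < 1, q = 1 - p, let s, t be positive integers, and let x be a real number with x < min(log(1/p), log(1/q)). Then the moment generating function of SNB(p, s, t) satisfies ∑_{k=s}^{s+t-1} C(k-1, s-1) p^s q^{k-s} e^{kx} + ∑_{k=t}^{s+t-1} C(k-1, t-1) p^{k-t} q^t e^{kx} = (p e^x/(1 - q e^x))^s · ∑_{j=s}^{s+t-1} C(s+t-1, j) (1 - q e^x)^j (q e^x)^{s+t-1-j} + (q e^x/(1 - p e^x))^t · ∑_{j=t}^{s+t-1} C(s+t-1, j) (1 - p e^x)^j (p e^x)^{s+t-1-j}. -/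

import Mathlib

open Finset

/-- Binomial tail recursion (Pascal step). -/
lemma snb_tail_rec (m t : ℕ) (a b : ℝ) (hab : a + b = 1) :
    ∑ i ∈ range (t+1), (Nat.choose (m+t+1) (m+1+i) : ℝ) * a^(m+1+i) * b^(t-i)
    = ∑ i ∈ range t, (Nat.choose (m+t) (m+1+i) : ℝ) * a^(m+1+i) * b^(t-1-i)
      + (Nat.choose (m+t) m : ℝ) * a^(m+1) * b^t := by
  have hsplit : ∀ i : ℕ, (Nat.choose (m+t+1) (m+1+i) : ℝ)
      = (Nat.choose (m+t) (m+i) : ℝ) + (Nat.choose (m+t) (m+1+i) : ℝ) := by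
    intro i
    have h := Nat.choose_succ_succ (m+t) (m+i)
    have h2 : m+t+1 = (m+t).succ := rfl
    have h3 : m+1+i = (m+i).succ := by omega
    rw [h2, h3, h]
    push_cast
    ring
  calc ∑ i ∈ range (t+1), (Nat.choose (m+t+1) (m+1+i) : ℝ) * a^(m+1+i) * b^(t-i)
      = ∑ i ∈ range (t+1), ((Nat.choose (m+t) (m+i) : ℝ) * a^(m+1+i) * b^(t-i)
          + (Nat.choose (m+t) (m+1+i) : ℝ) * a^(m+1+i) * b^(t-i)) := by
        refine sum_congr rfl fun i _ => ?_
        rw [hsplit]; ring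
    _ = (∑ i ∈ range (t+1), (Nat.choose (m+t) (m+i) : ℝ) * a^(m+1+i) * b^(t-i))
        + ∑ i ∈ range (t+1), (Nat.choose (m+t) (m+1+i) : ℝ) * a^(m+1+i) * b^(t-i) := by
        rw [sum_add_distrib]
    _ = (a * ∑ i ∈ range t, (Nat.choose (m+t) (m+1+i) : ℝ) * a^(m+1+i) * b^(t-1-i)
          + (Nat.choose (m+t) m : ℝ) * a^(m+1) * b^t)
        + b * ∑ i ∈ range t, (Nat.choose (m+t) (m+1+i) : ℝ) * a^(m+1+i) * b^(t-1-i) := by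
        congr 1
        · have h1 : ∑ i ∈ range t, (Nat.choose (m+t) (m+(i+1)) : ℝ) * a^(m+1+(i+1)) * b^(t-(i+1))
              = a * ∑ i ∈ range t, (Nat.choose (m+t) (m+1+i) : ℝ) * a^(m+1+i) * b^(t-1-i) := by
            rw [Finset.mul_sum]
            refine sum_congr rfl fun i hi => ?_
            have hi' : i < t := mem_range.mp hi
            have e1 : m + (i+1) = m+1+i := by omega
            have e2 : t - (i+1) = t-1-i := by omega
            have e3 : m+1+(i+1) = (m+1+i)+1 := by omega
            rw [e1, e2, e3, pow_succ]
            ring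
          rw [Finset.sum_range_succ' (fun i => (Nat.choose (m+t) (m+i) : ℝ) * a^(m+1+i) * b^(t-i)) t]
          rw [h1]
          norm_num
        · rw [Finset.sum_range_succ]
          have hz : Nat.choose (m+t) (m+1+t) = 0 := Nat.choose_eq_zero_of_lt (by omega)
          rw [hz]
          rw [Finset.mul_sum]
          simp only [Nat.cast_zero, zero_mul, mul_zero, add_zero]
          refine sum_congr rfl fun i hi => ?_
          have hi' : i < t := mem_range.mp hi
          have e2 : t - i = (t-1-i)+1 := by omega
          rw [e2, pow_succ]
          ring
    _ = _ := by
      have : a * (∑ i ∈ range t, (Nat.choose (m+t) (m+1+i) : ℝ) * a^(m+1+i) * b^(t-1-i))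
          + b * (∑ i ∈ range t, (Nat.choose (m+t) (m+1+i) : ℝ) * a^(m+1+i) * b^(t-1-i))
          = ∑ i ∈ range t, (Nat.choose (m+t) (m+1+i) : ℝ) * a^(m+1+i) * b^(t-1-i) := by
        rw [← add_mul, hab, one_mul]
      linarith [this]

/-- Negative binomial cdf = binomial tail, range form. -/
lemma snb_key (m : ℕ) (r : ℝ) : ∀ t : ℕ,
    ∑ i ∈ range t, (Nat.choose (m+i) m : ℝ) * (1-r)^(m+1) * r^i
    = ∑ i ∈ range t, (Nat.choose (m+t) (m+1+i) : ℝ) * (1-r)^(m+1+i) * r^(t-1-i) := by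
  intro t
  induction t with
  | zero => simp
  | succ t ih =>
    rw [Finset.sum_range_succ]
    have hrw : ∑ i ∈ range (t+1), (Nat.choose (m+(t+1)) (m+1+i) : ℝ) * (1-r)^(m+1+i) * r^(t+1-1-i)
        = ∑ i ∈ range (t+1), (Nat.choose (m+t+1) (m+1+i) : ℝ) * (1-r)^(m+1+i) * r^(t-i) := by
      refine sum_congr rfl fun i _ => ?_
      have e1 : m+(t+1) = m+t+1 := by omega
      have e2 : t+1-1-i = t-i := by omega
      rw [e1, e2]
    rw [hrw, snb_tail_rec m t (1-r) r (by ring), ← ih]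

/-- The moment generating function of the SNB(p, s, t) distribution. -/
theorem snb_mgf (p q : ℝ) (hp0 : 0 < p) (hp1 : p < 1) (hq : q = 1 - p)
    (s t : ℕ) (hs : 0 < s) (ht : 0 < t)
    (x : ℝ) (hx : x < min (Real.log (1 / p)) (Real.log (1 / q))) :
    (∑ k ∈ Finset.Icc s (s + t - 1),
        (Nat.choose (k - 1) (s - 1) : ℝ) * p ^ s * q ^ (k - s) * Real.exp (k * x)) +
    (∑ k ∈ Finset.Icc t (s + t - 1),
        (Nat.choose (k - 1) (t - 1) : ℝ) * p ^ (k - t) * q ^ t * Real.exp (k * x)) =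
    (p * Real.exp x / (1 - q * Real.exp x)) ^ s *
      (∑ j ∈ Finset.Icc s (s + t - 1),
        (Nat.choose (s + t - 1) j : ℝ) * (1 - q * Real.exp x) ^ j *
          (q * Real.exp x) ^ (s + t - 1 - j)) +
    (q * Real.exp x / (1 - p * Real.exp x)) ^ t *
      (∑ j ∈ Finset.Icc t (s + t - 1),
        (Nat.choose (s + t - 1) j : ℝ) * (1 - p * Real.exp x) ^ j *
          (p * Real.exp x) ^ (s + t - 1 - j)) := by
  obtain ⟨m, rfl⟩ : ∃ m, s = m + 1 := ⟨s - 1, by omega⟩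
  obtain ⟨u, rfl⟩ : ∃ u, t = u + 1 := ⟨t - 1, by omega⟩
  have hq0 : 0 < q := by rw [hq]; linarith
  set E := Real.exp x with hE
  have hE0 : 0 < E := Real.exp_pos x
  have hP1 : p * E < 1 := by
    have h1 : E < 1 / p := by
      rw [hE, ← Real.exp_log (show (0:ℝ) < 1/p by positivity)]
      exact Real.exp_lt_exp.mpr (lt_of_lt_of_le hx (min_le_left _ _))
    calc p * E < p * (1/p) := by exact mul_lt_mul_of_pos_left h1 hp0
      _ = 1 := by field_simp
  have hQ1 : q * E < 1 := by
    have h1 : E < 1 / q := by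
      rw [hE, ← Real.exp_log (show (0:ℝ) < 1/q by positivity)]
      exact Real.exp_lt_exp.mpr (lt_of_lt_of_le hx (min_le_right _ _))
    calc q * E < q * (1/q) := by exact mul_lt_mul_of_pos_left h1 hq0
      _ = 1 := by field_simp
  have h1Q : (1 : ℝ) - q * E ≠ 0 := by linarith
  have h1P : (1 : ℝ) - p * E ≠ 0 := by linarith
  have hidx : m + 1 + (u + 1) - 1 = m + u + 1 := by omega
  rw [hidx]
  have hexp : ∀ k : ℕ, Real.exp (k * x) = E ^ k := fun k => Real.exp_nat_mul x k
  -- First LHS term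
  have L1 : (∑ k ∈ Finset.Icc (m+1) (m+u+1),
        (Nat.choose (k - 1) (m + 1 - 1) : ℝ) * p ^ (m+1) * q ^ (k - (m+1)) * Real.exp (k * x))
      = (p*E) ^ (m+1) * ∑ i ∈ range (u+1), (Nat.choose (m+i) m : ℝ) * (q*E) ^ i := by
    rw [← Finset.Ico_add_one_right_eq_Icc, Finset.sum_Ico_eq_sum_range, Finset.mul_sum]
    have hlen : m + u + 1 + 1 - (m + 1) = u + 1 := by omega
    rw [hlen]
    refine sum_congr rfl fun i hi => ?_
    have e1 : m + 1 + i - 1 = m + i := by omega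
    have e2 : m + 1 + i - (m + 1) = i := by omega
    rw [e1, e2, hexp, show m+1-1 = m from rfl, show m+1+i = (m+1)+i from rfl, pow_add,
      mul_pow, mul_pow]
    ring
  -- Second LHS term
  have L2 : (∑ k ∈ Finset.Icc (u+1) (m+u+1),
        (Nat.choose (k - 1) (u + 1 - 1) : ℝ) * p ^ (k - (u+1)) * q ^ (u+1) * Real.exp (k * x))
      = (q*E) ^ (u+1) * ∑ i ∈ range (m+1), (Nat.choose (u+i) u : ℝ) * (p*E) ^ i := by
    rw [← Finset.Ico_add_one_right_eq_Icc, Finset.sum_Ico_eq_sum_range, Finset.mul_sum]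
    have hlen : m + u + 1 + 1 - (u + 1) = m + 1 := by omega
    rw [hlen]
    refine sum_congr rfl fun i hi => ?_
    have e1 : u + 1 + i - 1 = u + i := by omega
    have e2 : u + 1 + i - (u + 1) = i := by omega
    rw [e1, e2, hexp, show u+1-1 = u from rfl, show u+1+i = (u+1)+i from rfl, pow_add,
      mul_pow, mul_pow]
    ring
  -- First RHS sum
  have R1 : (∑ j ∈ Finset.Icc (m+1) (m+u+1),
        (Nat.choose (m+u+1) j : ℝ) * (1 - q*E) ^ j * (q*E) ^ (m + u + 1 - j))
      = (1 - q*E) ^ (m+1) * ∑ i ∈ range (u+1), (Nat.choose (m+i) m : ℝ) * (q*E) ^ i := by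
    rw [← Finset.Ico_add_one_right_eq_Icc, Finset.sum_Ico_eq_sum_range]
    have hlen : m + u + 1 + 1 - (m + 1) = u + 1 := by omega
    rw [hlen]
    calc ∑ i ∈ range (u+1),
            (Nat.choose (m+u+1) (m+1+i) : ℝ) * (1 - q*E) ^ (m+1+i) * (q*E) ^ (m+u+1 - (m+1+i))
        = ∑ i ∈ range (u+1),
            (Nat.choose (m+(u+1)) (m+1+i) : ℝ) * (1-(q*E)) ^ (m+1+i) * (q*E) ^ (u+1-1-i) := by
          refine sum_congr rfl fun i hi => ?_
          have e1 : m + u + 1 = m + (u+1) := by omega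
          have e2 : m + (u + 1) - (m + 1 + i) = u + 1 - 1 - i := by omega
          rw [e1, e2]
      _ = ∑ i ∈ range (u+1), (Nat.choose (m+i) m : ℝ) * (1-(q*E)) ^ (m+1) * (q*E) ^ i :=
          (snb_key m (q*E) (u+1)).symm
      _ = (1 - q*E) ^ (m+1) * ∑ i ∈ range (u+1), (Nat.choose (m+i) m : ℝ) * (q*E) ^ i := by
          rw [Finset.mul_sum]
          exact sum_congr rfl fun i _ => by ring
  -- Second RHS sum
  have R2 : (∑ j ∈ Finset.Icc (u+1) (m+u+1),
        (Nat.choose (m+u+1) j : ℝ) * (1 - p*E) ^ j * (p*E) ^ (m + u + 1 - j))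
      = (1 - p*E) ^ (u+1) * ∑ i ∈ range (m+1), (Nat.choose (u+i) u : ℝ) * (p*E) ^ i := by
    rw [← Finset.Ico_add_one_right_eq_Icc, Finset.sum_Ico_eq_sum_range]
    have hlen : m + u + 1 + 1 - (u + 1) = m + 1 := by omega
    rw [hlen]
    calc ∑ i ∈ range (m+1),
            (Nat.choose (m+u+1) (u+1+i) : ℝ) * (1 - p*E) ^ (u+1+i) * (p*E) ^ (m+u+1 - (u+1+i))
        = ∑ i ∈ range (m+1),
            (Nat.choose (u+(m+1)) (u+1+i) : ℝ) * (1-(p*E)) ^ (u+1+i) * (p*E) ^ (m+1-1-i) := by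
          refine sum_congr rfl fun i hi => ?_
          have e1 : m + u + 1 = u + (m+1) := by omega
          have e2 : u + (m + 1) - (u + 1 + i) = m + 1 - 1 - i := by omega
          rw [e1, e2]
      _ = ∑ i ∈ range (m+1), (Nat.choose (u+i) u : ℝ) * (1-(p*E)) ^ (u+1) * (p*E) ^ i :=
          (snb_key u (p*E) (m+1)).symm
      _ = (1 - p*E) ^ (u+1) * ∑ i ∈ range (m+1), (Nat.choose (u+i) u : ℝ) * (p*E) ^ i := by
          rw [Finset.mul_sum]
          exact sum_congr rfl fun i _ => by ring
  rw [L1, L2, R1, R2, div_pow, div_pow]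
  have hd1 : (1 - q*E) ^ (m+1) ≠ 0 := pow_ne_zero _ h1Q
  have hd2 : (1 - p*E) ^ (u+1) ≠ 0 := pow_ne_zero _ h1P
  rw [← mul_assoc, div_mul_cancel₀ _ hd1, ← mul_assoc, div_mul_cancel₀ _ hd2]
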